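/- Let q ≥ 2 be an integer and let X be a random variable with values in [0,1) whose law has density f, where f is lower semi-continuous at Lebesgue-almost every point of [0,1). Then for every n ≥ 0 and every 1-Lipschitz function h : [0,1] → ℝ, |E[h(T^n(X))] − ∫_0^1 h(t) dt| ≤ 1 − q^{−n} Σ_{k=1}^{q^n} inf_{I_{k;n}} f. In particular the Wasserstein-1 distance between the law of T^n(X) and Lebesgue measure on [0,1) tends to 0 as n → ∞. -/

import Mathlib

open MeasureTheory Set Filter
open scoped ENNReal NNReal

/-- The base-`q` map `T(x) = q·x − ⌊q·x⌋`. -/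
noncomputable def T (q : ℕ) : ℝ → ℝ := fun x => Int.fract ((q : ℝ) * x)

/-- The interval `I_{k;n} = [(k−1)q^{−n}, k·q^{−n})`. -/
noncomputable def Ikn (q n k : ℕ) : Set ℝ :=
  Set.Ico (((k : ℝ) - 1) / (q : ℝ) ^ n) ((k : ℝ) / (q : ℝ) ^ n)

lemma T_iterate (q : ℕ) (n : ℕ) (x : ℝ) (hx : x ∈ Set.Ico (0:ℝ) 1) :
    (T q)^[n] x = Int.fract ((q:ℝ)^n * x) := by
  induction n with
  | zero => simp [Int.fract_eq_self.2 ⟨hx.1, hx.2⟩]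
  | succ n ih =>
    rw [Function.iterate_succ_apply', ih, T]
    have : (q:ℝ) * Int.fract ((q:ℝ)^n * x) = (q:ℝ)^(n+1) * x - (q:ℤ) * ⌊(q:ℝ)^n * x⌋ := by
      rw [Int.fract]; push_cast; ring
    rw [this]
    push_cast
    rw [show ((q:ℝ) * ↑⌊(q:ℝ)^n * x⌋ : ℝ) = ((q * ⌊(q:ℝ)^n * x⌋ : ℤ) : ℝ) by push_cast; ring,
      Int.fract_sub_intCast]

section aux
variable {q n : ℕ}

lemma mem_Ikn_self (hq : 2 ≤ q) {x : ℝ} (hx : x ∈ Set.Ico (0:ℝ) 1) :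
    (⌊(q:ℝ)^n * x⌋).toNat + 1 ∈ Finset.Icc 1 (q^n) ∧
      x ∈ Ikn q n ((⌊(q:ℝ)^n * x⌋).toNat + 1) := by
  have hQ : (0:ℝ) < (q:ℝ)^n := by positivity
  have h0 : (0:ℤ) ≤ ⌊(q:ℝ)^n * x⌋ := Int.floor_nonneg.2 (by nlinarith [hx.1])
  have hlt : ⌊(q:ℝ)^n * x⌋ < (q^n : ℕ) := by
    rw [Int.floor_lt]; push_cast; nlinarith [hx.2]
  have hcast : ((⌊(q:ℝ)^n * x⌋).toNat : ℝ) = (⌊(q:ℝ)^n * x⌋ : ℝ) := by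
    exact_mod_cast congrArg (fun z : ℤ => (z:ℝ)) (Int.toNat_of_nonneg h0)
  constructor
  · simp only [Finset.mem_Icc]
    constructor
    all_goals omega
  · simp only [Ikn, Set.mem_Ico]
    constructor
    · rw [div_le_iff₀ hQ]
      push_cast [hcast]
      linarith [Int.floor_le ((q:ℝ)^n * x)]
    · rw [lt_div_iff₀ hQ]
      push_cast [hcast]
      linarith [Int.lt_floor_add_one ((q:ℝ)^n * x)]
end aux

lemma Ikn_subset (hq : 2 ≤ q) {k : ℕ} (hk : k ∈ Finset.Icc 1 (q^n)) :
    Ikn q n k ⊆ Set.Ico (0:ℝ) 1 := by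
  have hQ : (0:ℝ) < (q:ℝ)^n := by positivity
  simp only [Finset.mem_Icc] at hk
  intro x hx
  simp only [Ikn, Set.mem_Ico] at hx
  constructor
  · have h1 : (0:ℝ) ≤ ((k:ℝ) - 1) / (q:ℝ)^n := by
      apply div_nonneg _ hQ.le
      have : (1:ℝ) ≤ (k:ℝ) := by exact_mod_cast hk.1
      linarith
    linarith [hx.1]
  · have h2 : (k:ℝ) / (q:ℝ)^n ≤ 1 := by
      rw [div_le_one hQ]
      have : (k:ℝ) ≤ ((q^n : ℕ):ℝ) := by exact_mod_cast hk.2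
      simpa using this
    linarith [hx.2]

lemma toNat_floor_eq (hq : 2 ≤ q) {k : ℕ} (hk : k ∈ Finset.Icc 1 (q^n)) {x : ℝ}
    (hx : x ∈ Ikn q n k) : (⌊(q:ℝ)^n * x⌋).toNat + 1 = k := by
  have hQ : (0:ℝ) < (q:ℝ)^n := by positivity
  simp only [Finset.mem_Icc] at hk
  simp only [Ikn, Set.mem_Ico] at hx
  have hfl : ⌊(q:ℝ)^n * x⌋ = (k:ℤ) - 1 := by
    rw [Int.floor_eq_iff]
    constructor
    · push_cast
      rw [div_le_iff₀ hQ] at hx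
      linarith [hx.1]
    · push_cast
      rw [lt_div_iff₀ hQ] at hx
      linarith [hx.2]
  omega

lemma Ikn_union (hq : 2 ≤ q) :
    Set.Ico (0:ℝ) 1 = ⋃ k ∈ Finset.Icc 1 (q^n), Ikn q n k := by
  ext x
  simp only [Set.mem_iUnion, exists_prop]
  constructor
  · intro hx
    exact ⟨_, (mem_Ikn_self hq hx).1, (mem_Ikn_self hq hx).2⟩
  · rintro ⟨k, hk, hx⟩
    exact Ikn_subset hq hk hx

lemma Ikn_disjoint (hq : 2 ≤ q) : ∀ j k : ℕ, j ≠ k → Disjoint (Ikn q n j) (Ikn q n k) := by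
  have hQ : (0:ℝ) < (q:ℝ)^n := by positivity
  have key : ∀ j k : ℕ, j < k → Disjoint (Ikn q n j) (Ikn q n k) := by
    intro j k hjk
    rw [Ikn, Ikn, Set.Ico_disjoint_Ico]
    have hjk' : (j:ℝ) ≤ (k:ℝ) - 1 := by
      have : (j:ℝ) + 1 ≤ (k:ℝ) := by exact_mod_cast hjk
      linarith
    calc min ((j:ℝ)/(q:ℝ)^n) ((k:ℝ)/(q:ℝ)^n) ≤ (j:ℝ)/(q:ℝ)^n := min_le_left _ _
      _ ≤ ((k:ℝ)-1)/(q:ℝ)^n := by gcongr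
      _ ≤ max (((j:ℝ)-1)/(q:ℝ)^n) (((k:ℝ)-1)/(q:ℝ)^n) := le_max_right _ _
  intro j k h
  rcases h.lt_or_gt with h' | h'
  · exact key j k h'
  · exact (key k j h').symm

lemma Ikn_volume (hq : 2 ≤ q) (k : ℕ) :
    (volume (Ikn q n k)).toReal = ((q:ℝ)^n)⁻¹ := by
  have hQ : (0:ℝ) < (q:ℝ)^n := by positivity
  rw [Ikn, Real.volume_Ico, ENNReal.toReal_ofReal (by rw [sub_nonneg]; gcongr; linarith)]
  field_simp
  ring

lemma split_integral (hq : 2 ≤ q) (F : ℝ → ℝ) (hF : IntegrableOn F (Set.Ico (0:ℝ) 1) volume) :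
    ∫ x in Set.Ico (0:ℝ) 1, F x = ∑ k ∈ Finset.Icc 1 (q^n), ∫ x in Ikn q n k, F x := by
  rw [Ikn_union (n:=n) hq]
  exact integral_biUnion_finset _ (fun k _ => measurableSet_Ico)
    (fun j _ k _ hjk => Ikn_disjoint hq j k hjk)
    (fun k hk => hF.mono_set (by rw [Ikn_union (n:=n) hq]; exact Set.subset_biUnion_of_mem hk))

lemma floor_Ikn (hq : 2 ≤ q) {k : ℕ} (hk : k ∈ Finset.Icc 1 (q^n)) {x : ℝ}
    (hx : x ∈ Ikn q n k) : ⌊(q:ℝ)^n * x⌋ = (k:ℤ) - 1 := by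
  have hQ : (0:ℝ) < (q:ℝ)^n := by positivity
  simp only [Finset.mem_Icc] at hk
  simp only [Ikn, Set.mem_Ico] at hx
  rw [Int.floor_eq_iff]
  constructor
  · have h1 := hx.1
    rw [div_le_iff₀ hQ] at h1
    push_cast
    linarith [h1, mul_comm x ((q:ℝ)^n)]
  · have h2 := hx.2
    rw [lt_div_iff₀ hQ] at h2
    push_cast
    linarith [h2, mul_comm x ((q:ℝ)^n)]

lemma fract_Ikn (hq : 2 ≤ q) {k : ℕ} (hk : k ∈ Finset.Icc 1 (q^n)) {x : ℝ}
    (hx : x ∈ Ikn q n k) : Int.fract ((q:ℝ)^n * x) = (q:ℝ)^n * x - ((k:ℝ) - 1) := by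
  rw [Int.fract, floor_Ikn hq hk hx]; push_cast; ring

lemma f_facts {f : ℝ → ℝ} (hf_meas : Measurable f) (hf_nonneg : ∀ x, 0 ≤ f x)
    (hlint : ∫⁻ x, ENNReal.ofReal (f x) ∂(volume : Measure ℝ) = 1) :
    Integrable f (volume : Measure ℝ) ∧ ∫ x, f x ∂(volume : Measure ℝ) = 1 := by
  have hae : 0 ≤ᵐ[(volume : Measure ℝ)] f := ae_of_all _ hf_nonneg
  have hint : Integrable f (volume : Measure ℝ) := by
    refine ⟨hf_meas.aestronglyMeasurable, ?_⟩
    rw [hasFiniteIntegral_iff_ofReal hae, hlint]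
    exact ENNReal.one_lt_top
  refine ⟨hint, ?_⟩
  rw [integral_eq_lintegral_of_nonneg_ae hae hf_meas.aestronglyMeasurable, hlint]
  simp

lemma key {Ω : Type*} [MeasurableSpace Ω] (ℙ : Measure Ω) [IsProbabilityMeasure ℙ]
    (q : ℕ) (hq : 2 ≤ q) (f : ℝ → ℝ) (hf_meas : Measurable f) (hf_nonneg : ∀ x, 0 ≤ f x)
    (hf_supp : ∀ x, x ∉ Set.Ico (0:ℝ) 1 → f x = 0)
    (X : Ω → ℝ) (hX : Measurable X) (hXrange : ∀ ω, X ω ∈ Set.Ico (0:ℝ) 1)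
    (hlaw : Measure.map X ℙ = volume.withDensity (fun x => ENNReal.ofReal (f x)))
    (n : ℕ) (g : ℝ → ℝ) (hg : LipschitzWith 1 g) :
    |(∫ ω, g ((T q)^[n] (X ω)) ∂ℙ) - ∫ t in (0:ℝ)..1, g t|
      ≤ 1 - (q:ℝ)^(-(n:ℤ)) * ∑ k ∈ Finset.Icc 1 (q^n), sInf (f '' Ikn q n k) := by
  have hQ : (0:ℝ) < (q:ℝ)^n := by positivity
  set Q : ℝ := (q:ℝ)^n with hQdef
  -- the shifted test function
  set g' : ℝ → ℝ := fun t => g t - g 2⁻¹ with hg'def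
  have hg'_cont : Continuous g' := (hg.continuous).sub continuous_const
  have hg'_bd : ∀ t ∈ Set.Icc (0:ℝ) 1, |g' t| ≤ 2⁻¹ := by
    intro t ht
    have h1 : dist (g t) (g 2⁻¹) ≤ 1 * dist t 2⁻¹ := hg.dist_le_mul t 2⁻¹
    rw [Real.dist_eq, Real.dist_eq, one_mul] at h1
    have h2 : |t - 2⁻¹| ≤ 2⁻¹ := by
      rw [abs_le]; constructor <;> [linarith [ht.1]; linarith [ht.2]]
    calc |g' t| = |g t - g 2⁻¹| := rfl
      _ ≤ |t - 2⁻¹| := h1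
      _ ≤ 2⁻¹ := h2
  -- infima
  set m : ℕ → ℝ := fun k => sInf (f '' Ikn q n k) with hmdef
  have hIknNe : ∀ k : ℕ, (Ikn q n k).Nonempty := by
    intro k
    refine ⟨((k:ℝ) - 1)/Q, le_refl _, ?_⟩
    gcongr
    · linarith
  have hbdd : ∀ k : ℕ, BddBelow (f '' Ikn q n k) := by
    rintro k
    exact ⟨0, by rintro y ⟨x, -, rfl⟩; exact hf_nonneg x⟩
  have hm_nonneg : ∀ k : ℕ, 0 ≤ m k := by
    intro k
    exact le_csInf ((hIknNe k).image f) (by rintro y ⟨x, -, rfl⟩; exact hf_nonneg x)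
  have hm_le : ∀ (k : ℕ), ∀ x ∈ Ikn q n k, m k ≤ f x :=
    fun k x hx => csInf_le (hbdd k) ⟨x, hx, rfl⟩
  -- the composed function
  set G : ℝ → ℝ := fun x => g' (Int.fract (Q * x)) with hGdef
  have hfract_mem : ∀ x : ℝ, Int.fract (Q * x) ∈ Set.Ico (0:ℝ) 1 :=
    fun x => ⟨Int.fract_nonneg _, Int.fract_lt_one _⟩
  have hG_meas : Measurable G :=
    hg'_cont.measurable.comp (measurable_fract.comp (measurable_id.const_mul Q))
  have hG_bd : ∀ x, |G x| ≤ 2⁻¹ := fun x =>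
    hg'_bd _ ⟨(hfract_mem x).1, (hfract_mem x).2.le⟩
  -- integrability of f
  have hlint : ∫⁻ x, ENNReal.ofReal (f x) ∂(volume : Measure ℝ) = 1 := by
    have h1 : (Measure.map X ℙ) Set.univ = 1 := by
      rw [Measure.map_apply hX MeasurableSet.univ]; simp
    rw [hlaw, withDensity_apply _ MeasurableSet.univ, Measure.restrict_univ] at h1
    exact h1
  obtain ⟨hf_int, hf_total⟩ := f_facts hf_meas hf_nonneg hlint
  have hf_Ico : ∫ x in Set.Ico (0:ℝ) 1, f x = 1 := by
    rw [setIntegral_eq_integral_of_forall_compl_eq_zero hf_supp, hf_total]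
  -- Step A : rewrite the expectation
  set F : ℝ → ℝ := fun x => G x * f x with hFdef
  have hGX_int : Integrable (fun ω => G (X ω)) ℙ := by
    refine ⟨(hG_meas.comp hX).aestronglyMeasurable, ?_⟩
    apply HasFiniteIntegral.of_bounded (C := 2⁻¹)
    exact ae_of_all _ fun ω => by simpa [Real.norm_eq_abs] using hG_bd (X ω)
  have hF_int : Integrable F volume :=
    hf_int.bdd_mul (c := 2⁻¹) hG_meas.aestronglyMeasurable (ae_of_all _ fun x => by
      simpa [Real.norm_eq_abs] using hG_bd x)
  have hstepA : ∫ ω, g ((T q)^[n] (X ω)) ∂ℙ = (∫ ω, G (X ω) ∂ℙ) + g 2⁻¹ := by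
    have : ∀ ω, g ((T q)^[n] (X ω)) = G (X ω) + g 2⁻¹ := by
      intro ω
      rw [T_iterate q n _ (hXrange ω)]
      simp [hGdef, hg'def, hQdef]
    simp_rw [this]
    rw [integral_add hGX_int (integrable_const _)]
    simp
  have hstepB : ∫ t in (0:ℝ)..1, g t = (∫ t in (0:ℝ)..1, g' t) + g 2⁻¹ := by
    have : ∀ t : ℝ, g t = g' t + g 2⁻¹ := fun t => by simp [hg'def]
    rw [intervalIntegral.integral_congr (fun t _ => this t),
      intervalIntegral.integral_add (hg'_cont.intervalIntegrable _ _)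
        (intervalIntegrable_const)]
    simp
  -- Step C : expectation as an integral against the density
  have hstepC : ∫ ω, G (X ω) ∂ℙ = ∫ x in Set.Ico (0:ℝ) 1, F x := by
    rw [← integral_map hX.aemeasurable hG_meas.aestronglyMeasurable, hlaw]
    have hwd : volume.withDensity (fun x => ENNReal.ofReal (f x))
        = volume.withDensity (fun x => ((f x).toNNReal : ℝ≥0∞)) := rfl
    rw [hwd, integral_withDensity_eq_integral_smul hf_meas.real_toNNReal]
    have : ∀ x : ℝ, (f x).toNNReal • G x = F x := by
      intro x
      rw [NNReal.smul_def, Real.coe_toNNReal _ (hf_nonneg x), smul_eq_mul, hFdef, mul_comm]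
    simp_rw [this]
    exact (setIntegral_eq_integral_of_forall_compl_eq_zero
      (fun x hx => by simp [hFdef, hf_supp x hx])).symm
  set I : ℝ := ∫ t in (0:ℝ)..1, g' t with hIdef
  have hI_bd : |I| ≤ 2⁻¹ := by
    have h := intervalIntegral.norm_integral_le_of_norm_le_const (C := 2⁻¹) (a := (0:ℝ))
      (b := 1) (f := g') (fun x hx => by
        rw [Set.uIoc_of_le zero_le_one] at hx
        simpa [Real.norm_eq_abs] using hg'_bd x ⟨hx.1.le, hx.2⟩)
    simpa [Real.norm_eq_abs] using h
  -- integrability on pieces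
  have hvol : ∀ k : ℕ, volume (Ikn q n k) < ⊤ := by
    intro k
    rw [Ikn, Real.volume_Ico]
    exact ENNReal.ofReal_lt_top
  have hconst_int : ∀ (k : ℕ) (r : ℝ), IntegrableOn (fun _ => r) (Ikn q n k) volume :=
    fun k r => integrableOn_const (hvol k).ne
  have hGm_int : ∀ (k : ℕ) (r : ℝ), IntegrableOn (fun x => G x * r) (Ikn q n k) volume :=
    fun k r => (hconst_int k r).bdd_mul (c := 2⁻¹) hG_meas.aestronglyMeasurable
      (ae_of_all _ fun x => by simpa [Real.norm_eq_abs] using hG_bd x)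
  have hGfm_int : ∀ k : ℕ, IntegrableOn (fun x => G x * (f x - m k)) (Ikn q n k) volume := by
    intro k
    have : (fun x => G x * (f x - m k)) = fun x => F x - G x * m k := by
      funext x; simp [hFdef]; ring
    rw [this]
    exact (hF_int.integrableOn).sub (hGm_int k (m k))
  -- the value of ∫ G on each piece
  have hGpiece : ∀ k ∈ Finset.Icc 1 (q^n),
      ∫ x in Ikn q n k, G x = Q⁻¹ * I := by
    intro k hk
    have h1 : ∫ x in Ikn q n k, G x = ∫ x in Ikn q n k, g' (Q * x + (1 - (k:ℝ))) := by
      apply setIntegral_congr_fun measurableSet_Ico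
      intro x hx
      have := fract_Ikn hq hk hx
      simp only [hGdef]
      rw [this]
      congr 1
      ring
    have hab : ((k:ℝ) - 1)/Q ≤ (k:ℝ)/Q := by gcongr; linarith
    have h2 : ∫ x in Ikn q n k, g' (Q * x + (1 - (k:ℝ)))
        = ∫ x in (((k:ℝ) - 1)/Q)..((k:ℝ)/Q), g' (Q * x + (1 - (k:ℝ))) := by
      rw [intervalIntegral.integral_of_le hab, Ikn,
        Measure.restrict_congr_set Ico_ae_eq_Ioc]
    rw [h1, h2, intervalIntegral.integral_comp_mul_add g' hQ.ne' (1 - (k:ℝ))]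
    rw [show Q * (((k:ℝ) - 1)/Q) + (1 - (k:ℝ)) = 0 by field_simp; ring,
      show Q * ((k:ℝ)/Q) + (1 - (k:ℝ)) = 1 by field_simp; ring]
    rw [smul_eq_mul]
  -- decomposition on each piece
  set A : ℕ → ℝ := fun k => ∫ x in Ikn q n k, G x * (f x - m k) with hAdef
  have hsplitk : ∀ k ∈ Finset.Icc 1 (q^n),
      ∫ x in Ikn q n k, F x = A k + m k * (Q⁻¹ * I) := by
    intro k hk
    have h1 : A k = (∫ x in Ikn q n k, F x) - ∫ x in Ikn q n k, G x * m k := by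
      rw [hAdef]
      simp only
      rw [← integral_sub (hF_int.integrableOn) (hGm_int k (m k))]
      apply setIntegral_congr_fun measurableSet_Ico
      intro x _
      simp [hFdef]; ring
    have h2 : ∫ x in Ikn q n k, G x * m k = (Q⁻¹ * I) * m k := by
      rw [integral_mul_const, hGpiece k hk]
    rw [h1, h2]; ring
  -- bound on each piece
  have hA_bd : ∀ k ∈ Finset.Icc 1 (q^n),
      |A k| ≤ 2⁻¹ * ((∫ x in Ikn q n k, f x) - m k * Q⁻¹) := by
    intro k hk
    have hconst_eval : ∫ x in Ikn q n k, (m k : ℝ) = m k * Q⁻¹ := by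
      rw [setIntegral_const, measureReal_def, Ikn_volume hq, smul_eq_mul, mul_comm]
    have h1 : |A k| ≤ ∫ x in Ikn q n k, |G x| * |f x - m k| := by
      rw [hAdef]
      simpa [Real.norm_eq_abs, abs_mul] using norm_integral_le_integral_norm (μ := volume.restrict (Ikn q n k)) (fun x => G x * (f x - m k))
    have habs_int : IntegrableOn (fun x => |G x| * |f x - m k|) (Ikn q n k) volume := by
      have := (hGfm_int k).abs
      simpa [abs_mul, IntegrableOn] using this
    have hrhs_int : IntegrableOn (fun x => 2⁻¹ * (f x - m k)) (Ikn q n k) volume := by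
      have := ((hf_int.integrableOn (s := Ikn q n k)).sub (hconst_int k (m k))).const_mul (2⁻¹ : ℝ)
      simpa [IntegrableOn] using this
    have h2 : ∫ x in Ikn q n k, |G x| * |f x - m k|
        ≤ ∫ x in Ikn q n k, 2⁻¹ * (f x - m k) := by
      apply setIntegral_mono_on habs_int hrhs_int measurableSet_Ico
      intro x hx
      rw [abs_of_nonneg (sub_nonneg.2 (hm_le k x hx))]
      exact mul_le_mul_of_nonneg_right (hG_bd x) (sub_nonneg.2 (hm_le k x hx))
    have h3 : ∫ x in Ikn q n k, 2⁻¹ * (f x - m k)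
        = 2⁻¹ * ((∫ x in Ikn q n k, f x) - m k * Q⁻¹) := by
      rw [integral_const_mul, integral_sub (hf_int.integrableOn) (hconst_int k (m k)),
        hconst_eval]
    linarith [h1, h2, le_of_eq h3]
  -- total mass of f over the pieces
  have hsum_f : ∑ k ∈ Finset.Icc 1 (q^n), ∫ x in Ikn q n k, f x = 1 := by
    rw [← split_integral hq f hf_int.integrableOn, hf_Ico]
  set c : ℝ := Q⁻¹ * ∑ k ∈ Finset.Icc 1 (q^n), m k with hcdef
  have hc_le : c ≤ 1 := by
    have h1 : ∀ k ∈ Finset.Icc 1 (q^n), m k * Q⁻¹ ≤ ∫ x in Ikn q n k, f x := by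
      intro k hk
      have : ∫ x in Ikn q n k, (m k : ℝ) = m k * Q⁻¹ := by
        rw [setIntegral_const, measureReal_def, Ikn_volume hq, smul_eq_mul, mul_comm]
      rw [← this]
      exact setIntegral_mono_on (hconst_int k (m k)) (hf_int.integrableOn)
        measurableSet_Ico (fun x hx => hm_le k x hx)
    calc c = ∑ k ∈ Finset.Icc 1 (q^n), m k * Q⁻¹ := by
          rw [hcdef, Finset.mul_sum]
          exact Finset.sum_congr rfl (fun k _ => mul_comm _ _)
      _ ≤ ∑ k ∈ Finset.Icc 1 (q^n), ∫ x in Ikn q n k, f x := Finset.sum_le_sum h1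
      _ = 1 := hsum_f
  -- main identity
  have hmain : (∫ ω, G (X ω) ∂ℙ) - I
      = (∑ k ∈ Finset.Icc 1 (q^n), A k) + (c - 1) * I := by
    rw [hstepC, split_integral hq F hF_int.integrableOn, Finset.sum_congr rfl hsplitk,
      Finset.sum_add_distrib]
    have : ∑ k ∈ Finset.Icc 1 (q^n), m k * (Q⁻¹ * I) = c * I := by
      rw [← Finset.sum_mul, hcdef]
      ring
    rw [this]; ring
  -- final computation
  have hRHS : (q:ℝ)^(-(n:ℤ)) * ∑ k ∈ Finset.Icc 1 (q^n), sInf (f '' Ikn q n k) = c := by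
    rw [hcdef, zpow_neg, zpow_natCast]
  rw [hstepA, hstepB, hRHS]
  have habs : |((∫ ω, G (X ω) ∂ℙ) + g 2⁻¹) - (I + g 2⁻¹)| = |(∫ ω, G (X ω) ∂ℙ) - I| := by
    congr 1; ring
  rw [habs, hmain]
  calc |(∑ k ∈ Finset.Icc 1 (q^n), A k) + (c - 1) * I|
      ≤ |∑ k ∈ Finset.Icc 1 (q^n), A k| + |(c - 1) * I| := abs_add_le _ _
    _ ≤ (∑ k ∈ Finset.Icc 1 (q^n), |A k|) + (1 - c) * 2⁻¹ := by
        gcongr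
        · exact Finset.abs_sum_le_sum_abs _ _
        · rw [abs_mul]
          have : |c - 1| = 1 - c := by rw [abs_of_nonpos (by linarith)]; ring
          rw [this]
          exact mul_le_mul_of_nonneg_left hI_bd (by linarith)
    _ ≤ (∑ k ∈ Finset.Icc 1 (q^n), 2⁻¹ * ((∫ x in Ikn q n k, f x) - m k * Q⁻¹))
        + (1 - c) * 2⁻¹ := by gcongr; exact hA_bd _ ‹_›
    _ = 2⁻¹ * (1 - c) + (1 - c) * 2⁻¹ := by
        congr 1
        rw [← Finset.mul_sum, Finset.sum_sub_distrib, hsum_f, ← Finset.sum_mul]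
        congr 2
        rw [hcdef]; ring
    _ = 1 - c := by ring

lemma conv (q : ℕ) (hq : 2 ≤ q) (f : ℝ → ℝ) (hf_meas : Measurable f)
    (hf_nonneg : ∀ x, 0 ≤ f x) (hf_supp : ∀ x, x ∉ Set.Ico (0:ℝ) 1 → f x = 0)
    (hf_lsc : ∀ᵐ x ∂(volume : Measure ℝ),
      x ∈ Set.Ico (0:ℝ) 1 → LowerSemicontinuousAt f x)
    (hlint : ∫⁻ x, ENNReal.ofReal (f x) ∂(volume : Measure ℝ) = 1) :
    Tendsto (fun n : ℕ => (q:ℝ)^(-(n:ℤ)) * ∑ k ∈ Finset.Icc 1 (q^n), sInf (f '' Ikn q n k))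
      atTop (nhds 1) := by
  obtain ⟨hf_int, hf_total⟩ := f_facts hf_meas hf_nonneg hlint
  have hf_Ico : ∫ x in Set.Ico (0:ℝ) 1, f x = 1 := by
    rw [setIntegral_eq_integral_of_forall_compl_eq_zero hf_supp, hf_total]
  have hq1 : (1:ℝ) < (q:ℝ) := by exact_mod_cast hq.trans_lt' one_lt_two
  have hbdd : ∀ n k : ℕ, BddBelow (f '' Ikn q n k) :=
    fun n k => ⟨0, by rintro y ⟨x, -, rfl⟩; exact hf_nonneg x⟩
  have hIknNe : ∀ n k : ℕ, (Ikn q n k).Nonempty := by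
    intro n k
    have hQ : (0:ℝ) < (q:ℝ)^n := by positivity
    refine ⟨((k:ℝ) - 1)/(q:ℝ)^n, le_refl _, ?_⟩
    gcongr
    linarith
  have hm_nonneg : ∀ n k : ℕ, 0 ≤ sInf (f '' Ikn q n k) := fun n k =>
    le_csInf ((hIknNe n k).image f) (by rintro y ⟨x, -, rfl⟩; exact hf_nonneg x)
  have hm_le : ∀ (n k : ℕ), ∀ x ∈ Ikn q n k, sInf (f '' Ikn q n k) ≤ f x :=
    fun n k x hx => csInf_le (hbdd n k) ⟨x, hx, rfl⟩
  -- the step functions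
  set gn : ℕ → ℝ → ℝ :=
    fun n x => sInf (f '' Ikn q n ((⌊(q:ℝ)^n * x⌋).toNat + 1)) with hgndef
  have hgn_meas : ∀ n, Measurable (gn n) := by
    intro n
    have h : gn n = (fun z : ℤ => sInf (f '' Ikn q n (z.toNat + 1)))
        ∘ (fun x : ℝ => ⌊(q:ℝ)^n * x⌋) := rfl
    rw [h]
    exact measurable_from_top.comp (Int.measurable_floor.comp (measurable_id.const_mul _))
  have hgn_nonneg : ∀ n x, 0 ≤ gn n x := fun n x => hm_nonneg n _
  have hgn_le : ∀ n, ∀ x ∈ Set.Ico (0:ℝ) 1, gn n x ≤ f x := by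
    intro n x hx
    exact hm_le n _ x (mem_Ikn_self (n := n) hq hx).2
  -- a.e. convergence
  have h_lim : ∀ᵐ x ∂(volume.restrict (Set.Ico (0:ℝ) 1)),
      Tendsto (fun n => gn n x) atTop (nhds (f x)) := by
    filter_upwards [ae_restrict_of_ae hf_lsc, ae_restrict_mem measurableSet_Ico]
      with x hlsc hx
    have hlsc' := hlsc hx
    rw [tendsto_order]
    constructor
    · intro a ha
      set a' : ℝ := (a + f x)/2 with ha'def
      have ha1 : a' < f x := by rw [ha'def]; linarith
      have ha2 : a < a' := by rw [ha'def]; linarith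
      obtain ⟨δ, hδ, hball⟩ := Metric.eventually_nhds_iff.1 (hlsc' a' ha1)
      obtain ⟨M, hM⟩ : ∃ M : ℕ, ((q:ℝ)⁻¹)^M < δ :=
        exists_pow_lt_of_lt_one hδ (by rw [inv_lt_one_iff₀]; right; exact hq1)
      rw [eventually_atTop]
      refine ⟨M, fun n hn => ?_⟩
      have hQ : (0:ℝ) < (q:ℝ)^n := by positivity
      have hlen : ((q:ℝ)^n)⁻¹ < δ := by
        calc ((q:ℝ)^n)⁻¹ = ((q:ℝ)⁻¹)^n := by rw [inv_pow]
          _ ≤ ((q:ℝ)⁻¹)^M := by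
              apply pow_le_pow_of_le_one (by positivity) (by
                rw [inv_le_one_iff₀]; right; exact hq1.le) hn
          _ < δ := hM
      have hclose : ∀ y ∈ Ikn q n ((⌊(q:ℝ)^n * x⌋).toNat + 1), dist y x < δ := by
        intro y hy
        have hxmem := (mem_Ikn_self (n := n) hq hx).2
        set k := (⌊(q:ℝ)^n * x⌋).toNat + 1
        simp only [Ikn, Set.mem_Ico] at hy hxmem
        have hsub : ((k:ℝ))/(q:ℝ)^n - ((k:ℝ) - 1)/(q:ℝ)^n = ((q:ℝ)^n)⁻¹ := by
          field_simp
          ring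
        rw [Real.dist_eq, abs_sub_lt_iff]
        constructor <;> nlinarith [hy.1, hy.2, hxmem.1, hxmem.2]
      refine lt_of_lt_of_le ha2 (le_csInf ((hIknNe n _).image f) ?_)
      rintro y ⟨z, hz, rfl⟩
      exact (hball (hclose z hz)).le
    · intro a ha
      exact Filter.Eventually.of_forall fun n => lt_of_le_of_lt (hgn_le n x hx) ha
  -- dominated convergence
  have h_bound : ∀ n, ∀ᵐ x ∂(volume.restrict (Set.Ico (0:ℝ) 1)), ‖gn n x‖ ≤ f x := by
    intro n
    filter_upwards [ae_restrict_mem measurableSet_Ico] with x hx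
    rw [Real.norm_eq_abs, abs_of_nonneg (hgn_nonneg n x)]
    exact hgn_le n x hx
  have hDCT : Tendsto (fun n => ∫ x in Set.Ico (0:ℝ) 1, gn n x) atTop (nhds 1) := by
    have := tendsto_integral_of_dominated_convergence (μ := volume.restrict (Set.Ico (0:ℝ) 1))
      f (fun n => (hgn_meas n).aestronglyMeasurable) hf_int.integrableOn h_bound h_lim
    rwa [hf_Ico] at this
  -- identification of the integrals with the Riemann sums
  have hident : ∀ n : ℕ, ∫ x in Set.Ico (0:ℝ) 1, gn n x
      = (q:ℝ)^(-(n:ℤ)) * ∑ k ∈ Finset.Icc 1 (q^n), sInf (f '' Ikn q n k) := by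
    intro n
    have hgn_int : IntegrableOn (gn n) (Set.Ico (0:ℝ) 1) volume := by
      apply Integrable.mono hf_int.integrableOn (hgn_meas n).aestronglyMeasurable
      filter_upwards [ae_restrict_mem measurableSet_Ico] with x hx
      rw [Real.norm_eq_abs, Real.norm_eq_abs, abs_of_nonneg (hgn_nonneg n x),
        abs_of_nonneg (hf_nonneg x)]
      exact hgn_le n x hx
    rw [split_integral hq (gn n) hgn_int]
    have hpiece : ∀ k ∈ Finset.Icc 1 (q^n),
        ∫ x in Ikn q n k, gn n x = sInf (f '' Ikn q n k) * ((q:ℝ)^n)⁻¹ := by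
      intro k hk
      have : ∀ x ∈ Ikn q n k, gn n x = sInf (f '' Ikn q n k) := by
        intro x hx
        have := toNat_floor_eq hq hk hx
        simp only [hgndef]
        rw [this]
      rw [show (∫ x in Ikn q n k, gn n x) = ∫ x in Ikn q n k, sInf (f '' Ikn q n k) from
          setIntegral_congr_fun (show MeasurableSet (Ikn q n k) from measurableSet_Ico) this,
        setIntegral_const, measureReal_def, Ikn_volume hq, smul_eq_mul, mul_comm]
    rw [Finset.sum_congr rfl hpiece, ← Finset.sum_mul, zpow_neg, zpow_natCast]
    ring
  exact hDCT.congr hident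

theorem stmt8
    {Ω : Type*} [MeasurableSpace Ω] (ℙ : Measure Ω) [IsProbabilityMeasure ℙ]
    (q : ℕ) (hq : 2 ≤ q)
    (f : ℝ → ℝ) (hf_meas : Measurable f) (hf_nonneg : ∀ x, 0 ≤ f x)
    (hf_supp : ∀ x, x ∉ Set.Ico (0:ℝ) 1 → f x = 0)
    -- `f` is lower semi-continuous at Lebesgue-almost every point of `[0,1)`
    (hf_lsc : ∀ᵐ x ∂(volume : Measure ℝ),
      x ∈ Set.Ico (0:ℝ) 1 → LowerSemicontinuousAt f x)
    (X : Ω → ℝ) (hX : Measurable X) (hXrange : ∀ ω, X ω ∈ Set.Ico (0:ℝ) 1)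
    (hlaw : Measure.map X ℙ = volume.withDensity (fun x => ENNReal.ofReal (f x))) :
    -- bound for every `1`-Lipschitz test function `h : [0,1] → ℝ`
    (∀ n : ℕ, ∀ h : ℝ → ℝ, LipschitzOnWith 1 h (Set.Icc (0:ℝ) 1) →
      |(∫ ω, h ((T q)^[n] (X ω)) ∂ℙ) - ∫ t in (0:ℝ)..1, h t|
        ≤ 1 - (q : ℝ) ^ (-(n : ℤ)) * ∑ k ∈ Finset.Icc 1 (q ^ n), sInf (f '' Ikn q n k))
    -- in particular the Wasserstein-1 distance (in its Kantorovich–Rubinstein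
    -- dual form) between the law of `T^n(X)` and Lebesgue measure on `[0,1)`
    -- tends to `0`
    ∧ Tendsto (fun n : ℕ =>
        ⨆ h : {h : ℝ → ℝ // LipschitzOnWith 1 h (Set.Icc (0:ℝ) 1)},
          |(∫ ω, (h : ℝ → ℝ) ((T q)^[n] (X ω)) ∂ℙ) - ∫ t in (0:ℝ)..1, (h : ℝ → ℝ) t|)
        atTop (nhds 0) := by
  have hTmem : ∀ (n : ℕ) (ω : Ω), (T q)^[n] (X ω) ∈ Set.Icc (0:ℝ) 1 := by
    intro n ω
    rw [T_iterate q n _ (hXrange ω)]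
    exact ⟨Int.fract_nonneg _, (Int.fract_lt_one _).le⟩
  have part1 : ∀ n : ℕ, ∀ h : ℝ → ℝ, LipschitzOnWith 1 h (Set.Icc (0:ℝ) 1) →
      |(∫ ω, h ((T q)^[n] (X ω)) ∂ℙ) - ∫ t in (0:ℝ)..1, h t|
        ≤ 1 - (q : ℝ) ^ (-(n : ℤ)) * ∑ k ∈ Finset.Icc 1 (q ^ n), sInf (f '' Ikn q n k) := by
    intro n h hh
    obtain ⟨g, hgLip, hEq⟩ := hh.extend_real
    have e1 : ∫ ω, h ((T q)^[n] (X ω)) ∂ℙ = ∫ ω, g ((T q)^[n] (X ω)) ∂ℙ :=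
      integral_congr_ae (ae_of_all _ fun ω => hEq (hTmem n ω))
    have e2 : ∫ t in (0:ℝ)..1, h t = ∫ t in (0:ℝ)..1, g t := by
      apply intervalIntegral.integral_congr
      rw [Set.uIcc_of_le zero_le_one]
      exact fun t ht => hEq ht
    rw [e1, e2]
    exact key ℙ q hq f hf_meas hf_nonneg hf_supp X hX hXrange hlaw n g hgLip
  refine ⟨part1, ?_⟩
  have hlint : ∫⁻ x, ENNReal.ofReal (f x) ∂(volume : Measure ℝ) = 1 := by
    have h1 : (Measure.map X ℙ) Set.univ = 1 := by
      rw [Measure.map_apply hX MeasurableSet.univ]; simp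
    rw [hlaw, withDensity_apply _ MeasurableSet.univ, Measure.restrict_univ] at h1
    exact h1
  have hconv := conv q hq f hf_meas hf_nonneg hf_supp hf_lsc hlint
  have hconv' : Tendsto (fun n : ℕ =>
      1 - (q:ℝ)^(-(n:ℤ)) * ∑ k ∈ Finset.Icc 1 (q^n), sInf (f '' Ikn q n k))
      atTop (nhds 0) := by
    simpa using (tendsto_const_nhds (x := (1:ℝ)) (f := atTop)).sub hconv
  set W : ℕ → ℝ := fun n =>
    ⨆ h : {h : ℝ → ℝ // LipschitzOnWith 1 h (Set.Icc (0:ℝ) 1)},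
      |(∫ ω, (h : ℝ → ℝ) ((T q)^[n] (X ω)) ∂ℙ) - ∫ t in (0:ℝ)..1, (h : ℝ → ℝ) t| with hWdef
  have hlip0 : LipschitzOnWith 1 (fun _ : ℝ => (0:ℝ)) (Set.Icc (0:ℝ) 1) := by
    intro x _ y _; simp
  haveI : Nonempty {h : ℝ → ℝ // LipschitzOnWith 1 h (Set.Icc (0:ℝ) 1)} := ⟨⟨fun _ => 0, hlip0⟩⟩
  have hbdd : ∀ n, BddAbove (Set.range (fun h : {h : ℝ → ℝ // LipschitzOnWith 1 h (Set.Icc (0:ℝ) 1)} =>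
      |(∫ ω, (h : ℝ → ℝ) ((T q)^[n] (X ω)) ∂ℙ) - ∫ t in (0:ℝ)..1, (h : ℝ → ℝ) t|)) := by
    intro n
    refine ⟨1 - (q:ℝ)^(-(n:ℤ)) * ∑ k ∈ Finset.Icc 1 (q^n), sInf (f '' Ikn q n k), ?_⟩
    rintro y ⟨hsub, rfl⟩
    exact part1 n hsub.1 hsub.2
  have hW_le : ∀ n, W n ≤ 1 - (q:ℝ)^(-(n:ℤ)) * ∑ k ∈ Finset.Icc 1 (q^n), sInf (f '' Ikn q n k) := by
    intro n
    exact ciSup_le fun hsub => part1 n hsub.1 hsub.2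
  have hW_nonneg : ∀ n, 0 ≤ W n := by
    intro n
    refine le_trans (le_of_eq ?_)
      (le_ciSup (hbdd n) (⟨fun _ => 0, hlip0⟩ : {h : ℝ → ℝ // LipschitzOnWith 1 h (Set.Icc (0:ℝ) 1)}))
    simp
  exact squeeze_zero hW_nonneg hW_le hconv'
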